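/- Assume the polynomial Hales–Jewett theorem: for any r, d, q ∈ ℕ there exists N such that, with V = {1,…,N}^d × {1,…,q}, for every r-coloring of Finset V there exist a ⊆ V and a nonempty γ ⊆ {1,…,N} with a ∩ (γ^d × {1,…,q}) = ∅ such that a, a ∪ (γ^d×{1}), …, a ∪ (γ^d×{q}) all have the same color. Then for every finite coloring of ℤ and all d, q ∈ ℕ there exist a ∈ ℤ and n ≥ 1 such that a, a+n^d, a+2n^d, …, a+q·n^d are all of the same color. -/

import Mathlib

/-- The polynomial Hales–Jewett theorem implies: for every finite coloring of `ℤ` and all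
`d, q`, there are a monochromatic arithmetic progression `a, a+n^d, …, a+q·n^d` with
common difference a perfect `d`-th power `n^d`, `n ≥ 1`. -/
theorem PHJ_implies_power_progressions
    (PHJ : ∀ r d q : ℕ, ∃ N : ℕ, ∀ χ : Finset ((Fin d → ℕ) × ℕ) → Fin r,
      ∃ (a : Finset ((Fin d → ℕ) × ℕ)) (γ : Finset ℕ),
        γ.Nonempty ∧ γ ⊆ Finset.Icc 1 N ∧
        a ⊆ (Fintype.piFinset fun _ : Fin d => Finset.Icc 1 N) ×ˢ Finset.Icc 1 q ∧
        Disjoint a ((Fintype.piFinset fun _ : Fin d => γ) ×ˢ Finset.Icc 1 q) ∧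
        ∀ i ∈ Finset.Icc 1 q,
          χ (a ∪ (Fintype.piFinset fun _ : Fin d => γ) ×ˢ {i}) = χ a) :
    ∀ (r : ℕ) (χ : ℤ → Fin r) (d q : ℕ),
      ∃ (a : ℤ) (n : ℕ), 1 ≤ n ∧
        ∀ i : ℕ, i ≤ q → χ (a + (i : ℤ) * (n : ℤ) ^ d) = χ a := by
  intro r χ d q
  obtain ⟨N, hN⟩ := PHJ r d q
  set χ' : Finset ((Fin d → ℕ) × ℕ) → Fin r :=
    fun s => χ ((∑ p ∈ s, p.2 : ℕ) : ℤ) with hχ'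
  obtain ⟨a, γ, hγne, hγsub, hasub, hdisj, hmono⟩ := hN χ'
  refine ⟨((∑ p ∈ a, p.2 : ℕ) : ℤ), γ.card, hγne.card_pos, ?_⟩
  intro i hi
  rcases Nat.eq_zero_or_pos i with hi0 | hi1
  · simp [hi0]
  have hmem : i ∈ Finset.Icc 1 q := Finset.mem_Icc.2 ⟨hi1, hi⟩
  have key := hmono i hmem
  have hdisj' : Disjoint a ((Fintype.piFinset fun _ : Fin d => γ) ×ˢ ({i} : Finset ℕ)) := by
    refine hdisj.mono_right (Finset.product_subset_product_right ?_)
    simpa using hmem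
  have hsum : (∑ p ∈ a ∪ (Fintype.piFinset fun _ : Fin d => γ) ×ˢ ({i} : Finset ℕ), p.2)
      = (∑ p ∈ a, p.2) + i * γ.card ^ d := by
    rw [Finset.sum_union hdisj']
    congr 1
    rw [Finset.sum_product]
    simp [Fintype.card_piFinset, mul_comm, Finset.prod_const]
  have := key
  simp only [hχ'] at this
  rw [hsum] at this
  rw [← this]
  congr 1
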